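/- Let V be a finite-dimensional real inner product space, A symmetric positive definite, R a smoother with adjoint R†, and K := (Id − (Id − RA)(Id − R†A)) A⁻¹. If the smoothing error operator S := Id − R†A satisfies ‖Sv‖_A ≤ ‖v‖_A for all v (A-norm nonexpansiveness), then ⟨Kλ, λ⟩ ≥ 0 for all λ ∈ V, where ‖v‖²_A = ⟨Av, v⟩. -/
import Mathlib


open scoped RealInnerProductSpace

/-- If the smoothing error operator is A-norm nonexpansive, the quadratic form of `K`
is nonnegative. -/
theorem K_nonneg
    {V : Type*} [NormedAddCommGroup V] [InnerProductSpace ℝ V] [FiniteDimensional ℝ V]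
    (A Ainv R Rdag : V →ₗ[ℝ] V)
    (hAsymm : ∀ u v : V, ⟪A u, v⟫ = ⟪u, A v⟫)
    (hApos : ∀ v : V, v ≠ 0 → 0 < ⟪A v, v⟫)
    (hAinv₁ : A ∘ₗ Ainv = LinearMap.id) (hAinv₂ : Ainv ∘ₗ A = LinearMap.id)
    (hadj : ∀ u v : V, ⟪R u, v⟫ = ⟪u, Rdag v⟫)
    (S : V →ₗ[ℝ] V) (hS : S = LinearMap.id - Rdag ∘ₗ A)
    (hScontr : ∀ v : V,
      Real.sqrt ⟪A (S v), S v⟫ ≤ Real.sqrt ⟪A v, v⟫)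
    (K : V →ₗ[ℝ] V)
    (hK : K = (LinearMap.id -
        (LinearMap.id - R ∘ₗ A) ∘ₗ (LinearMap.id - Rdag ∘ₗ A)) ∘ₗ Ainv) :
    ∀ lam : V, 0 ≤ ⟪K lam, lam⟫ := by
  -- nonnegativity of the quadratic form of A
  have hAnn : ∀ v : V, 0 ≤ ⟪A v, v⟫ := by
    intro v
    by_cases h : v = 0
    · simp [h]
    · exact (hApos v h).le
  -- from the contraction property in sqrt form, get it for the squares
  have hContr2 : ∀ v : V, ⟪A (S v), S v⟫ ≤ ⟪A v, v⟫ := by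
    intro v
    have h := hScontr v
    nlinarith [Real.sq_sqrt (hAnn (S v)), Real.sq_sqrt (hAnn v),
      Real.sqrt_nonneg (⟪A (S v), S v⟫ : ℝ), Real.sqrt_nonneg (⟪A v, v⟫ : ℝ), h]
  intro lam
  set v := Ainv lam with hv
  have hlam : A v = lam := by
    have := LinearMap.ext_iff.mp hAinv₁ lam
    simpa using this
  have hSv : S v = v - Rdag (A v) := by simp [hS]
  have hKlam : K lam = v - (S v - R (A (S v))) := by
    simp [hK, hS, ← hv, LinearMap.sub_apply]
  have key : ⟪R (A (S v)), A v⟫ = ⟪S v, A v⟫ - ⟪A (S v), S v⟫ := by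
    have h1 : ⟪R (A (S v)), A v⟫ = ⟪A (S v), Rdag (A v)⟫ := hadj _ _
    have h2 : ⟪A (S v), S v⟫ = ⟪A (S v), v⟫ - ⟪A (S v), Rdag (A v)⟫ := by
      rw [hSv, inner_sub_right]
    have h3 : ⟪A (S v), v⟫ = ⟪S v, A v⟫ := hAsymm _ _
    linarith
  have expand : ⟪K lam, lam⟫ = ⟪A v, v⟫ - ⟪A (S v), S v⟫ := by
    rw [hKlam, ← hlam, inner_sub_left, inner_sub_left, key]
    have : ⟪v, A v⟫ = ⟪A v, v⟫ := real_inner_comm _ _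
    linarith
  rw [expand]
  linarith [hContr2 v]
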